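/- Let p ∈ ℝ^n \ {0} and let H be a subgroup of (ℝ^n, +) with p ∉ H and |H| < 𝔠. Then for any closed subset F of ℝ^n of cardinality 𝔠, there exists z ∈ F such that the subgroup generated by H ∪ {z} still does not contain p. -/

import Mathlib

theorem stmt12 (n : ℕ) (p : Fin n → ℝ) (hp : p ≠ 0)
    (H : AddSubgroup (Fin n → ℝ)) (hpH : p ∉ H)
    (hsmall : Cardinal.mk H < Cardinal.continuum)
    (F : Set (Fin n → ℝ)) (hFc : IsClosed F)
    (hFcard : Cardinal.mk F = Cardinal.continuum) :
    ∃ z ∈ F, p ∉ AddSubgroup.closure ((H : Set (Fin n → ℝ)) ∪ {z}) := by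
  set B : Set (Fin n → ℝ) :=
    Set.range (fun q : ℤ × H => ((q.1 : ℝ))⁻¹ • (p - (q.2 : Fin n → ℝ))) with hB
  have hBcard : Cardinal.mk B < Cardinal.continuum := by
    refine lt_of_le_of_lt (Cardinal.mk_range_le) ?_
    rw [Cardinal.mk_prod, Cardinal.lift_id, Cardinal.lift_id]
    exact Cardinal.mul_lt_of_lt Cardinal.aleph0_le_continuum
      (by simpa using Cardinal.aleph0_lt_continuum) hsmall
  have hns : ¬ F ⊆ B := by
    intro hsub
    have := Cardinal.mk_le_mk_of_subset hsub
    rw [hFcard] at this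
    exact absurd (lt_of_le_of_lt this hBcard) (lt_irrefl _)
  obtain ⟨z, hzF, hzB⟩ := Set.not_subset.mp hns
  refine ⟨z, hzF, ?_⟩
  intro hpcl
  rw [AddSubgroup.closure_union, AddSubgroup.closure_eq] at hpcl
  rcases (AddSubgroup.mem_sup).mp hpcl with ⟨a, haH, b, hb, hab⟩
  rcases AddSubgroup.mem_closure_singleton.mp hb with ⟨m, hm⟩
  rcases eq_or_ne m 0 with rfl | hm0
  · simp at hm
    rw [← hm, add_zero] at hab
    exact hpH (hab ▸ haH)
  · apply hzB
    refine ⟨(m, ⟨a, haH⟩), ?_⟩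
    have hmz : (m : ℝ) • z = p - a := by
      rw [Int.cast_smul_eq_zsmul, hm]
      rw [← hab]; abel
    have : ((m : ℝ))⁻¹ • ((m : ℝ) • z) = ((m : ℝ))⁻¹ • (p - a) := by rw [hmz]
    rw [inv_smul_smul₀ (by exact_mod_cast hm0)] at this
    exact this.symm
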